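/- Let F = A^{1/m} be an m-th root Finsler metric on an open subset U ⊆ ℝⁿ such that for every x ∈ U the polynomial y ↦ A(x,y) is irreducible in ℝ[y¹,…,yⁿ]. If F has isotropic Berwald curvature, i.e. B^i_{jkl} = c(x){F_{y^jy^k}δ^i_l + F_{y^ky^l}δ^i_j + F_{y^ly^j}δ^i_k + F_{y^jy^ky^l}y^i} for some smooth scalar function c on U (where F_{y^jy^k} = ∂²F/∂y^j∂y^k and F_{y^jy^ky^l} = ∂³F/∂y^j∂y^k∂y^l), then c ≡ 0 and B = 0, i.e. F is a Berwald metric. -/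

import Mathlib

open scoped BigOperators
open Matrix

noncomputable section

/-- Partial derivative of `f` in the `i`-th coordinate direction at `v`. -/
def pd {n : ℕ} (f : (Fin n → ℝ) → ℝ) (i : Fin n) (v : Fin n → ℝ) : ℝ :=
  fderiv ℝ f v (Pi.single i 1)

/-- `A(x,y) = a_{i₁⋯i_m}(x) y^{i₁}⋯y^{i_m}`. -/
def Amap {n m : ℕ} (a : (Fin m → Fin n) → (Fin n → ℝ) → ℝ) (x y : Fin n → ℝ) : ℝ :=
  ∑ ι : Fin m → Fin n, a ι x * ∏ k, y (ι k)

/-- Fundamental tensor `g_{ij} = ½ ∂²(F²)/∂y^i∂y^j`. -/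
def gmat {n : ℕ} (F : (Fin n → ℝ) → (Fin n → ℝ) → ℝ) (x y : Fin n → ℝ) :
    Matrix (Fin n) (Fin n) ℝ :=
  Matrix.of fun i j => (1/2) * pd (fun v => pd (fun w => (F x w)^2) j v) i y

/-- Spray coefficients `G^i = ¼ g^{il}[∂²(F²)/∂x^k∂y^l · y^k − ∂(F²)/∂x^l]`. -/
def sprayCoef {n : ℕ} (F : (Fin n → ℝ) → (Fin n → ℝ) → ℝ) (i : Fin n)
    (x y : Fin n → ℝ) : ℝ :=
  (1/4) * ∑ l, (gmat F x y)⁻¹ i l *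
    ((∑ k, pd (fun x' => pd (fun w => (F x' w)^2) l y) k x * y k)
      - pd (fun x' => (F x' y)^2) l x)

/-- Berwald curvature `B^i_{jkl} = ∂³G^i/∂y^j∂y^k∂y^l`. -/
def Bcurv {n : ℕ} (F : (Fin n → ℝ) → (Fin n → ℝ) → ℝ) (i j k l : Fin n)
    (x y : Fin n → ℝ) : ℝ :=
  pd (fun u => pd (fun v => pd (fun w => sprayCoef F i x w) l v) k u) j y

lemma pd_neg_fun {n : ℕ} (f : (Fin n → ℝ) → ℝ) (i : Fin n) (v : Fin n → ℝ) :
    pd (fun u => -f u) i v = -pd f i v := by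
  simp [pd, fderiv_neg]

lemma fderiv_comp_neg_apply {n : ℕ} (f : (Fin n → ℝ) → ℝ) (v w : Fin n → ℝ) :
    fderiv ℝ (fun u => f (-u)) v w = -fderiv ℝ f (-v) w := by
  by_cases h : DifferentiableAt ℝ f (-v)
  · have hneg : DifferentiableAt ℝ (fun u : Fin n → ℝ => -u) v :=
      (differentiable_id.neg : Differentiable ℝ (fun u : Fin n → ℝ => -u)) v
    have h1 : fderiv ℝ (fun u => f (-u)) v
        = (fderiv ℝ f (-v)).comp (fderiv ℝ (fun u : Fin n → ℝ => -u) v) := by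
      exact fderiv_comp v h hneg
    have h2 : fderiv ℝ (fun u : Fin n → ℝ => -u) v
        = -(ContinuousLinearMap.id ℝ (Fin n → ℝ)) := by
      rw [show (fun u : Fin n → ℝ => -u) = fun u : Fin n → ℝ => -(id u) from rfl, fderiv_fun_neg]
      simp [fderiv_id']
    rw [h1, h2]
    simp
  · have h2 : ¬ DifferentiableAt ℝ (fun u => f (-u)) v := by
      intro hcon
      have hneg : DifferentiableAt ℝ (fun u : Fin n → ℝ => -u) (-v) :=
        (differentiable_id.neg : Differentiable ℝ (fun u : Fin n → ℝ => -u)) (-v)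
      have hcon' : DifferentiableAt ℝ (fun u => f (-u)) (- -v) := by
        rw [neg_neg]; exact hcon
      have := hcon'.comp (-v) hneg
      simp only [Function.comp_def, neg_neg] at this
      exact h this
    rw [fderiv_zero_of_not_differentiableAt h, fderiv_zero_of_not_differentiableAt h2]
    simp

lemma pd_even {n : ℕ} (f : (Fin n → ℝ) → ℝ) (hev : ∀ u, f (-u) = f u) (i : Fin n)
    (v : Fin n → ℝ) : pd f i (-v) = -pd f i v := by
  have h := fderiv_comp_neg_apply f v (Pi.single i 1)
  rw [show (fun u => f (-u)) = f from funext hev] at h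
  unfold pd
  linarith

lemma pd_odd {n : ℕ} (f : (Fin n → ℝ) → ℝ) (hodd : ∀ u, f (-u) = -f u) (i : Fin n)
    (v : Fin n → ℝ) : pd f i (-v) = pd f i v := by
  have h := fderiv_comp_neg_apply f v (Pi.single i 1)
  rw [show (fun u => f (-u)) = fun u => -f u from funext hodd, fderiv_fun_neg] at h
  unfold pd
  simp only [ContinuousLinearMap.neg_apply] at h
  linarith

lemma Amap_neg {n m : ℕ} (a : (Fin m → Fin n) → (Fin n → ℝ) → ℝ) (x y : Fin n → ℝ) :
    Amap a x (-y) = (-1:ℝ)^m * Amap a x y := by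
  unfold Amap
  rw [Finset.mul_sum]
  refine Finset.sum_congr rfl fun ι _ => ?_
  have : ∏ k, (-y) (ι k) = (-1:ℝ)^m * ∏ k, y (ι k) := by
    have : ∀ k : Fin m, (-y) (ι k) = (-1:ℝ) * y (ι k) := by intro k; simp
    rw [Finset.prod_congr rfl fun k _ => this k, Finset.prod_mul_distrib,
      Finset.prod_const, Finset.card_univ, Fintype.card_fin]
  rw [this]; ring

/-- an m-th root metric with isotropic Berwald curvature
necessarily has `c ≡ 0`, i.e. it is a Berwald metric. -/
theorem mth_root_isotropic_Berwald
    (n m : ℕ) (hn : 2 ≤ n) (hm : 3 ≤ m)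
    (U : Set (Fin n → ℝ)) (hU : IsOpen U)
    (a : (Fin m → Fin n) → (Fin n → ℝ) → ℝ)
    (ha_smooth : ∀ ι, ContDiff ℝ (⊤:ℕ∞) (a ι))
    (ha_symm : ∀ (σ : Equiv.Perm (Fin m)) (ι : Fin m → Fin n) (x : Fin n → ℝ),
      a (ι ∘ σ) x = a ι x)
    (hApos : ∀ x ∈ U, ∀ y : Fin n → ℝ, y ≠ 0 → 0 < Amap a x y)
    (F : (Fin n → ℝ) → (Fin n → ℝ) → ℝ)
    (hF : ∀ x y, F x y = (Amap a x y) ^ ((1:ℝ)/m))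
    (hgpd : ∀ x ∈ U, ∀ y : Fin n → ℝ, y ≠ 0 → (gmat F x y).PosDef)
    (hirr : ∀ x ∈ U, ∃ P : MvPolynomial (Fin n) ℝ, Irreducible P ∧
      ∀ y : Fin n → ℝ, MvPolynomial.eval y P = Amap a x y)
    (c : (Fin n → ℝ) → ℝ) (hc : ContDiffOn ℝ (⊤:ℕ∞) c U)
    (hB : ∀ x ∈ U, ∀ y : Fin n → ℝ, y ≠ 0 → ∀ i j k l,
      Bcurv F i j k l x y = c x *
        (pd (fun v => pd (F x) k v) j y * (if i = l then (1:ℝ) else 0)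
          + pd (fun v => pd (F x) l v) k y * (if i = j then (1:ℝ) else 0)
          + pd (fun v => pd (F x) j v) l y * (if i = k then (1:ℝ) else 0)
          + pd (fun u => pd (fun v => pd (F x) l v) k u) j y * y i))
    :
    (∀ x ∈ U, c x = 0) ∧
    (∀ x ∈ U, ∀ y : Fin n → ℝ, y ≠ 0 → ∀ i j k l, Bcurv F i j k l x y = 0) := by
  have key : ∀ x ∈ U, c x = 0 := by
    intro x hx
    have i0 : Fin n := ⟨0, by omega⟩
    have i1 : Fin n := ⟨1, by omega⟩
    set y1 : Fin n → ℝ := (fun _ => (1:ℝ)) with hy1def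
    have hy1 : y1 ≠ 0 := by
      intro h
      have := congrFun h ⟨0, by omega⟩
      simp [hy1def] at this
    have hy1app : ∀ i : Fin n, y1 i = 1 := fun _ => rfl
    rcases Nat.even_or_odd m with hme | hmo
    · -- m even
      have hm1 : ((-1:ℝ))^m = 1 := hme.neg_one_pow
      have hFeven : ∀ x' w, F x' (-w) = F x' w := by
        intro x' w; rw [hF, hF, Amap_neg, hm1, one_mul]
      -- gmat is even in y
      have hgeven : ∀ z, gmat F x (-z) = gmat F x z := by
        intro z
        ext i j
        show (1/2) * pd (fun v => pd (fun w => (F x w)^2) j v) i (-z)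
           = (1/2) * pd (fun v => pd (fun w => (F x w)^2) j v) i z
        rw [pd_odd _ (fun v => pd_even (fun w => (F x w)^2)
          (fun u => by show F x (-u) ^ 2 = F x u ^ 2; rw [hFeven]) j v) i z]
      -- sprayCoef is even in y
      have hSeven : ∀ i z, sprayCoef F i x (-z) = sprayCoef F i x z := by
        intro i z
        unfold sprayCoef
        rw [hgeven]
        congr 1
        refine Finset.sum_congr rfl fun l _ => ?_
        congr 1
        congr 1
        · refine Finset.sum_congr rfl fun k _ => ?_
          have h1 : (fun x' => pd (fun w => (F x' w)^2) l (-z))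
              = fun x' => -(pd (fun w => (F x' w)^2) l z) := by
            funext x'
            exact pd_even _ (fun u => by show F x' (-u) ^ 2 = F x' u ^ 2; rw [hFeven]) l z
          rw [h1, pd_neg_fun]
          simp only [Pi.neg_apply]
          ring
        · have h2 : (fun x' => (F x' (-z))^2) = fun x' => (F x' z)^2 := by
            funext x'; rw [hFeven]
          rw [h2]
      -- Bcurv is odd in y
      have hBodd : ∀ i j k l z, Bcurv F i j k l x (-z) = -Bcurv F i j k l x z := by
        intro i j k l z
        unfold Bcurv
        exact pd_even _ (fun u => pd_odd _ (fun v => pd_even _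
          (fun w => hSeven i w) l v) k u) j z
      -- the bracket annihilates
      have hT0 : ∀ z : Fin n → ℝ, z ≠ 0 → ∀ i j k l, c x *
          (pd (fun v => pd (F x) k v) j z * (if i = l then (1:ℝ) else 0)
            + pd (fun v => pd (F x) l v) k z * (if i = j then (1:ℝ) else 0)
            + pd (fun v => pd (F x) j v) l z * (if i = k then (1:ℝ) else 0)
            + pd (fun u => pd (fun v => pd (F x) l v) k u) j z * z i) = 0 := by
        intro z hz i j k l
        have h1 := hB x hx z hz i j k l
        have h2 := hB x hx (-z) (neg_ne_zero.mpr hz) i j k l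
        rw [hBodd] at h2
        have e1 : ∀ p q : Fin n, pd (fun v => pd (F x) q v) p (-z)
            = pd (fun v => pd (F x) q v) p z := fun p q =>
          pd_odd _ (fun v => pd_even (F x) (hFeven x) q v) p z
        have e2 : pd (fun u => pd (fun v => pd (F x) l v) k u) j (-z)
            = - pd (fun u => pd (fun v => pd (F x) l v) k u) j z :=
          pd_even _ (fun u => pd_odd _ (fun v => pd_even (F x) (hFeven x) l v) k u) j z
        rw [e1, e1, e1, e2] at h2
        simp only [Pi.neg_apply] at h2
        ring_nf at h1 h2 ⊢
        linarith
      -- smoothness of F x near y1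
      have hA1 : (0:ℝ) < Amap a x y1 := hApos x hx y1 hy1
      have hAcd : ContDiff ℝ (⊤:ℕ∞) (Amap a x) := by
        unfold Amap
        apply ContDiff.sum
        intro ι _
        exact contDiff_const.mul
          (contDiff_prod fun k _ => contDiff_apply (𝕜 := ℝ) (E := ℝ) (ι k))
      have hFeq : F x = fun w => Amap a x w ^ ((1:ℝ)/m) := funext (hF x)
      have hFcd : ∀ v : Fin n → ℝ, Amap a x v ≠ 0 → ContDiffAt ℝ 2 (F x) v := by
        intro v hv
        rw [hFeq]
        exact ((hAcd.contDiffAt).rpow_const_of_ne hv).of_le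
          (by
            have h2t : ((2:ℕ∞) : WithTop ℕ∞) ≤ ((⊤:ℕ∞) : WithTop ℕ∞) :=
              WithTop.coe_le_coe.mpr le_top
            simpa using h2t)
      have hFd : ∀ v : Fin n → ℝ, Amap a x v ≠ 0 → DifferentiableAt ℝ (F x) v :=
        fun v hv => (hFcd v hv).differentiableAt two_ne_zero
      have hdiff : DifferentiableAt ℝ (fderiv ℝ (F x)) y1 :=
        ((hFcd y1 (ne_of_gt hA1)).fderiv_right (m := 1) le_rfl).differentiableAt one_ne_zero
      have hpd2 : ∀ p q : Fin n, pd (fun v => pd (F x) q v) p y1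
          = fderiv ℝ (fderiv ℝ (F x)) y1 (Pi.single p 1) (Pi.single q 1) := by
        intro p q
        show fderiv ℝ (fun v => fderiv ℝ (F x) v (Pi.single q 1)) y1 (Pi.single p 1) = _
        rw [fderiv_clm_apply hdiff (differentiableAt_const _)]
        simp
      have hsymm : ∀ p q : Fin n, pd (fun v => pd (F x) q v) p y1
          = pd (fun v => pd (F x) p v) q y1 := by
        intro p q
        rw [hpd2, hpd2]
        exact (hFcd y1 (ne_of_gt hA1)).isSymmSndFDerivAt (by simp [minSmoothness_of_isRCLikeNormedField]) _ _
      by_contra hcx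
      have hT : ∀ i j k l : Fin n,
          (pd (fun v => pd (F x) k v) j y1 * (if i = l then (1:ℝ) else 0)
            + pd (fun v => pd (F x) l v) k y1 * (if i = j then (1:ℝ) else 0)
            + pd (fun v => pd (F x) j v) l y1 * (if i = k then (1:ℝ) else 0)
            + pd (fun u => pd (fun v => pd (F x) l v) k u) j y1 * y1 i) = 0 := by
        intro i j k l
        rcases mul_eq_zero.mp (hT0 y1 hy1 i j k l) with h | h
        · exact absurd h hcx
        · exact h
      have hcomp : ∀ p : Fin n, ∃ q : Fin n, q ≠ p := by
        intro p
        rcases eq_or_ne p ⟨0, by omega⟩ with h | h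
        · exact ⟨⟨1, by omega⟩, by rw [h]; simp [Fin.ext_iff]⟩
        · exact ⟨⟨0, by omega⟩, Ne.symm h⟩
      have hdiag : ∀ p : Fin n, pd (fun v => pd (F x) p v) p y1 = 0 := by
        intro p
        obtain ⟨q, hq⟩ := hcomp p
        have h1 := hT q p p p
        have h2 := hT p p p p
        simp only [hy1app, if_neg hq, eq_self_iff_true, if_true, mul_zero,
          mul_one, zero_add, add_zero] at h1 h2
        linarith
      have hoff : ∀ p q : Fin n, pd (fun v => pd (F x) q v) p y1 = 0 := by
        intro p q
        rcases eq_or_ne p q with rfl | hpq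
        · exact hdiag p
        · have h1 := hT q p p q
          have h2 := hT p p p q
          simp only [hy1app, if_neg hpq, if_neg (Ne.symm hpq), eq_self_iff_true,
            if_true, mul_zero, mul_one, zero_add, add_zero] at h1 h2
          have hs := hsymm p q
          have hd := hdiag p
          linarith
      -- the fundamental tensor degenerates
      have hVopen : IsOpen {v : Fin n → ℝ | 0 < Amap a x v} :=
        isOpen_lt continuous_const hAcd.continuous
      have hEv : ∀ q : Fin n, (fun v => pd (fun w => (F x w)^2) q v)
          =ᶠ[nhds y1] fun v => 2 * (F x v * pd (F x) q v) := by
        intro q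
        filter_upwards [hVopen.mem_nhds hA1] with v hv
        have hd : DifferentiableAt ℝ (F x) v := hFd v (ne_of_gt hv)
        show fderiv ℝ (fun w => (F x w)^2) v (Pi.single q 1) = _
        have hsq : (fun w => (F x w)^2) = fun w => F x w * F x w := by
          funext w; ring
        rw [hsq, fderiv_fun_mul hd hd]
        simp only [ContinuousLinearMap.add_apply, ContinuousLinearMap.coe_smul',
          Pi.smul_apply, smul_eq_mul, pd]
        ring
      have hpdqd : ∀ q : Fin n, DifferentiableAt ℝ (fun v => pd (F x) q v) y1 := by
        intro q
        show DifferentiableAt ℝ (fun v => fderiv ℝ (F x) v (Pi.single q 1)) y1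
        exact hdiff.clm_apply (differentiableAt_const _)
      have hgv : ∀ p q : Fin n, gmat F x y1 p q
          = pd (F x) p y1 * pd (F x) q y1 := by
        intro p q
        show (1/2) * pd (fun v => pd (fun w => (F x w)^2) q v) p y1 = _
        have e1 : pd (fun v => pd (fun w => (F x w)^2) q v) p y1
            = pd (fun v => 2 * (F x v * pd (F x) q v)) p y1 := by
          show fderiv ℝ _ y1 (Pi.single p 1) = fderiv ℝ _ y1 (Pi.single p 1)
          rw [(hEv q).fderiv_eq]
        have e2 : pd (fun v => 2 * (F x v * pd (F x) q v)) p y1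
            = 2 * (F x y1 * pd (fun v => pd (F x) q v) p y1
                 + pd (F x) q y1 * pd (F x) p y1) := by
          show fderiv ℝ _ y1 (Pi.single p 1) = _
          rw [fderiv_const_mul (a := fun v => F x v * pd (F x) q v) ((hFd y1 (ne_of_gt hA1)).mul (hpdqd q)) 2,
            fderiv_fun_mul (hFd y1 (ne_of_gt hA1)) (hpdqd q)]
          simp only [ContinuousLinearMap.coe_smul', Pi.smul_apply, smul_eq_mul,
            ContinuousLinearMap.add_apply, pd]
        rw [e1, e2, hoff p q]
        ring
      obtain ⟨u, hu0, hsum⟩ : ∃ u : Fin n → ℝ, u ≠ 0 ∧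
          ∑ i, pd (F x) i y1 * u i = 0 := by
        by_cases hv : ∃ p, pd (F x) p y1 ≠ 0
        · obtain ⟨p, hp⟩ := hv
          obtain ⟨q, hq⟩ := hcomp p
          refine ⟨fun i => if i = q then pd (F x) p y1
            else if i = p then -pd (F x) q y1 else 0, ?_, ?_⟩
          · intro h
            have := congrFun h q
            simp only [if_pos rfl, Pi.zero_apply] at this
            exact hp this
          · have hsplit : ∀ i : Fin n, pd (F x) i y1 *
                (if i = q then pd (F x) p y1 else if i = p then -pd (F x) q y1 else 0)
                = (if i = q then pd (F x) q y1 * pd (F x) p y1 else 0)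
                + (if i = p then -(pd (F x) p y1 * pd (F x) q y1) else 0) := by
              intro i
              rcases eq_or_ne i q with rfl | h1
              · simp only [eq_self_iff_true, if_true, if_neg hq]
                ring
              · simp only [if_neg h1]
                rcases eq_or_ne i p with rfl | h2
                · simp only [eq_self_iff_true, if_true]; ring
                · simp only [if_neg h2]; ring
            rw [Finset.sum_congr rfl fun i _ => hsplit i, Finset.sum_add_distrib,
              Finset.sum_ite_eq' Finset.univ q, Finset.sum_ite_eq' Finset.univ p]
            simp only [Finset.mem_univ, if_pos]
            ring
        · push_neg at hv
          exact ⟨y1, hy1, by simp [hv]⟩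
      have hpos := (hgpd x hx y1 hy1).dotProduct_mulVec_pos hu0
      have hmv : ∀ i, (gmat F x y1 *ᵥ u) i
          = pd (F x) i y1 * ∑ j, pd (F x) j y1 * u j := by
        intro i
        show ∑ j, gmat F x y1 i j * u j = _
        rw [Finset.mul_sum]
        refine Finset.sum_congr rfl fun j _ => ?_
        rw [hgv]; ring
      have hdot : dotProduct (star u) (gmat F x y1 *ᵥ u) = 0 := by
        have : dotProduct (star u) (gmat F x y1 *ᵥ u)
            = ∑ i, u i * (pd (F x) i y1 * ∑ j, pd (F x) j y1 * u j) := by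
          refine Finset.sum_congr rfl fun i _ => ?_
          rw [hmv i]
          simp [star_trivial]
        rw [this]
        have : ∀ i : Fin n, u i * (pd (F x) i y1 * ∑ j, pd (F x) j y1 * u j)
            = (pd (F x) i y1 * u i) * ∑ j, pd (F x) j y1 * u j := by
          intro i; ring
        rw [Finset.sum_congr rfl fun i _ => this i, ← Finset.sum_mul, hsum,
          zero_mul]
      rw [hdot] at hpos
      exact lt_irrefl _ hpos
    · -- m odd : impossible
      exfalso
      have h1 := hApos x hx y1 hy1
      have h2 := hApos x hx (-y1) (neg_ne_zero.mpr hy1)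
      rw [Amap_neg, hmo.neg_one_pow] at h2
      linarith
  refine ⟨key, ?_⟩
  intro x hx y hy i j k l
  rw [hB x hx y hy i j k l, key x hx, zero_mul]
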